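/- Let k0 ≠ 0 and c₃ be real constants, let w : ℝ → ℝ be twice differentiable, and define u(t,x,y) = w(z)/(c₃ + 6k₀t)^{1/3} with z = (c₃ + 6k₀t)⁵/y⁶, on a region where c₃ + 6k₀t > 0 and y ≠ 0. Then u satisfies the ZK equation u_{xt} − (u u_x)_x − u_{yy} = 0 if and only if w satisfies 7w'(z) + 6z·w''(z) = 0 at the corresponding z. -/

import Mathlib

/-- The Zabolotskaya–Khokhlov equation `u_{xt} − (u u_x)_x − u_{yy} = 0`
at the point `(t,x,y)`. -/
noncomputable def ZK (u : ℝ → ℝ → ℝ → ℝ) (t x y : ℝ) : Prop :=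
  deriv (fun x' => deriv (fun t' => u t' x' y) t) x
    - deriv (fun x' => u t x' y * deriv (fun x'' => u t x'' y) x') x
    - deriv (fun y' => deriv (fun y'' => u t x y'') y') y = 0

theorem reduction_L25 (k₀ c₃ : ℝ) (hk : k₀ ≠ 0) (w : ℝ → ℝ) (hw : ContDiff ℝ 2 w)
    (t x y : ℝ) (ht : c₃ + 6 * k₀ * t > 0) (hy : y ≠ 0) :
    ZK (fun t _ y => w ((c₃ + 6 * k₀ * t) ^ (5 : ℕ) / y ^ (6 : ℕ))
          / (c₃ + 6 * k₀ * t) ^ ((1 : ℝ) / 3)) t x y ↔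
      (fun z => 7 * deriv w z + 6 * z * deriv (deriv w) z = 0)
        ((c₃ + 6 * k₀ * t) ^ (5 : ℕ) / y ^ (6 : ℕ)) := by
  have hw1 : Differentiable ℝ w := hw.differentiable (by norm_num)
  have hw2 : Differentiable ℝ (deriv w) := by
    have h : ContDiff ℝ ((1:ℕ)+1 : ℕ) w := by exact_mod_cast hw
    exact ((contDiff_succ_iff_deriv (f := w) (n := 1)).mp (by norm_num; exact hw)).2.2.differentiable (by norm_num)
  set A : ℝ := (c₃ + 6 * k₀ * t) ^ (5 : ℕ) with hAdef
  have hA : 0 < A := pow_pos ht 5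
  set B : ℝ := (c₃ + 6 * k₀ * t) ^ ((1 : ℝ) / 3) with hBdef
  have hB : 0 < B := Real.rpow_pos_of_pos ht _
  set z : ℝ := A / y ^ (6 : ℕ) with hzdef
  -- derivative of the inner map s ↦ A / s^6
  have hg : ∀ y' : ℝ, y' ≠ 0 →
      HasDerivAt (fun s : ℝ => A / s ^ (6 : ℕ)) (-(6 * A) / y' ^ (7 : ℕ)) y' := by
    intro y' hy'
    have h1 : HasDerivAt (fun s : ℝ => s ^ (6 : ℕ)) ((6 : ℕ) * y' ^ (5 : ℕ)) y' := by
      simpa using hasDerivAt_pow 6 y'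
    have h2 : HasDerivAt (fun s : ℝ => A / s ^ (6 : ℕ)) _ y' := (hasDerivAt_const y' A).div h1 (pow_ne_zero 6 hy')
    convert h2 using 1
    field_simp
    ring
  -- first y-derivative
  have hderiv1 : ∀ y' : ℝ, y' ≠ 0 →
      deriv (fun s : ℝ => w (A / s ^ (6 : ℕ)) / B) y'
        = deriv w (A / y' ^ (6 : ℕ)) * (-(6 * A) / y' ^ (7 : ℕ)) / B := by
    intro y' hy'
    have h := (((hw1 (A / y' ^ (6 : ℕ))).hasDerivAt.comp y' (hg y' hy')).div_const B)
    exact h.deriv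
  -- the inner-deriv function agrees near y with an explicit formula
  have heq : (fun y' => deriv (fun y'' : ℝ => w (A / y'' ^ (6 : ℕ)) / B) y')
      =ᶠ[nhds y] fun y' => deriv w (A / y' ^ (6 : ℕ)) * (-(6 * A) / y' ^ (7 : ℕ)) / B := by
    filter_upwards [eventually_ne_nhds hy] with y' hy' using hderiv1 y' hy'
  -- second y-derivative
  have hr : HasDerivAt (fun y' : ℝ => -(6 * A) / y' ^ (7 : ℕ)) (42 * A / y ^ (8 : ℕ)) y := by
    have h1 : HasDerivAt (fun s : ℝ => s ^ (7 : ℕ)) ((7 : ℕ) * y ^ (6 : ℕ)) y := by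
      simpa using hasDerivAt_pow 7 y
    have h2 : HasDerivAt (fun y' : ℝ => -(6 * A) / y' ^ (7 : ℕ)) _ y := (hasDerivAt_const y (-(6 * A))).div h1 (pow_ne_zero 7 hy)
    convert h2 using 1
    field_simp
    ring
  have hF : HasDerivAt (fun y' : ℝ => deriv w (A / y' ^ (6 : ℕ)))
      (deriv (deriv w) z * (-(6 * A) / y ^ (7 : ℕ))) y :=
    by exact (hw2 z).hasDerivAt.comp y (hg y hy)
  have hprod := ((hF.mul hr).div_const B)
  have hderiv2 : deriv (fun y' => deriv (fun y'' : ℝ => w (A / y'' ^ (6 : ℕ)) / B) y') y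
      = (deriv (deriv w) z * (-(6 * A) / y ^ (7 : ℕ)) * (-(6 * A) / y ^ (7 : ℕ))
          + deriv w (A / y ^ (6 : ℕ)) * (42 * A / y ^ (8 : ℕ))) / B := by
    rw [heq.deriv_eq]
    exact hprod.deriv
  -- reduce ZK to the second y-derivative
  unfold ZK
  simp only [deriv_const', mul_zero, deriv_const]
  rw [hderiv2]
  -- final algebraic equivalence
  have key : (deriv (deriv w) z * (-(6 * A) / y ^ (7 : ℕ)) * (-(6 * A) / y ^ (7 : ℕ))
        + deriv w (A / y ^ (6 : ℕ)) * (42 * A / y ^ (8 : ℕ)))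
      = (6 * A / y ^ (8 : ℕ)) * (7 * deriv w z + 6 * z * deriv (deriv w) z) := by
    rw [hzdef]
    field_simp
    ring
  rw [key]
  have hfac : (6 * A / y ^ (8 : ℕ)) ≠ 0 :=
    div_ne_zero (by positivity) (pow_ne_zero 8 hy)
  constructor
  · intro h
    have hB' : B ≠ 0 := ne_of_gt hB
    field_simp at h
    exact (mul_eq_zero.mp (by linarith : 6 * A * (7 * deriv w z + 6 * z * deriv (deriv w) z) = 0)).resolve_left (by positivity)
  · intro h
    simp [h]
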